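/- arXiv:1504.06006 — 2 statements merged into one kernel-verified Lean document; each statement's English description precedes it below -/
import Mathlib

section
/- Pillai's trace equals the regression slope: Let Y be an n×k real matrix and x ∈ ℝⁿ, with A = (1 | Y) of full column rank and x not a multiple of 1. Define T = Yᵀ(I − 11ᵀ/n)Y, E = Yᵀ(I − B(BᵀB)⁻¹Bᵀ)Y where B = (1 | x), and V = tr((T − E)T⁻¹). Let b̂ be the Y-coefficient vector of the least-squares regression of x on (1, Y), s = Y·b̂, and β̂ the slope of the least-squares simple regression of s on (1, x). Then V = β̂. -/
open Matrix

lemma aux_isUnit_of_rank_eq_card {m : Type*} [Fintype m] [DecidableEq m]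
    (M : Matrix m m ℝ) (h : M.rank = Fintype.card m) : IsUnit M := by
  rw [← Matrix.mulVec_surjective_iff_isUnit]
  have h1 : LinearMap.range M.mulVecLin = ⊤ := by
    apply Submodule.eq_top_of_finrank_eq
    rw [← Matrix.rank, h, Module.finrank_pi]
  intro v
  obtain ⟨w, hw⟩ := h1 ▸ Submodule.mem_top (x := v) (R := ℝ)
  exact ⟨w, hw⟩

lemma aux_trace_vecMulVec_mul {k : ℕ} (a b : Fin k → ℝ) (M : Matrix (Fin k) (Fin k) ℝ) :
    Matrix.trace (vecMulVec a b * M) = b ⬝ᵥ (M *ᵥ a) := by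
  rw [vecMulVec_eq Unit, Matrix.mul_assoc, Matrix.trace_mul_comm, Matrix.mul_assoc,
    ← Matrix.replicateCol_mulVec, Matrix.replicateRow_mul_replicateCol]
  simp [Matrix.trace]

lemma aux_conj_vecMulVec {n k : ℕ} (Y : Matrix (Fin n) (Fin k) ℝ) (c : Fin n → ℝ) :
    Yᵀ * vecMulVec c c * Y = vecMulVec (Yᵀ *ᵥ c) (Yᵀ *ᵥ c) := by
  rw [vecMulVec_eq Unit, vecMulVec_eq Unit]
  simp only [Matrix.mul_assoc]
  rw [← Matrix.replicateRow_vecMul, ← Matrix.mulVec_transpose, ← Matrix.mul_assoc, ← Matrix.replicateCol_mulVec]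

/-- main theorem: Pillai's trace `V = tr((T−E)T⁻¹)` for MANOVA of `Y` on `x`
equals the least-squares slope `β̂` of the simple regression of the score `s = Y·b̂`
on `x`, where `b̂` are the `Y`-coefficients of the regression of `x` on `(1, Y)`. -/
theorem pillai_trace_eq_slope (n k : ℕ) (Y : Matrix (Fin n) (Fin k) ℝ) (x : Fin n → ℝ)
    (u : Fin n → ℝ) (hu : u = fun _ => (1 : ℝ))
    (A : Matrix (Fin n) (Unit ⊕ Fin k) ℝ)
    (hA : A = fromCols (Matrix.of fun i (_ : Unit) => u i) Y)
    (hrank : A.rank = k + 1)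
    (hx : ∀ a : ℝ, x ≠ a • u)
    (B : Matrix (Fin n) (Unit ⊕ Unit) ℝ)
    (hB : B = fromCols (Matrix.of fun i (_ : Unit) => u i)
      (Matrix.of fun i (_ : Unit) => x i))
    (T E : Matrix (Fin k) (Fin k) ℝ)
    (hT : T = Yᵀ * (1 - (n : ℝ)⁻¹ • vecMulVec u u) * Y)
    (hE : E = Yᵀ * (1 - B * (Bᵀ * B)⁻¹ * Bᵀ) * Y)
    (V : ℝ) (hV : V = ((T - E) * T⁻¹).trace)
    (bhat : Fin k → ℝ)
    (hbhat : bhat = fun j => ((Aᵀ * A)⁻¹ *ᵥ (Aᵀ *ᵥ x)) (Sum.inr j))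
    (s : Fin n → ℝ) (hs : s = Y *ᵥ bhat)
    (βhat : ℝ) (hβ : βhat = ((Bᵀ * B)⁻¹ *ᵥ (Bᵀ *ᵥ s)) (Sum.inr ())) :
    V = βhat := by
  set U : Matrix (Fin n) Unit ℝ := Matrix.of fun i (_ : Unit) => u i with hU
  set S1 : ℝ := ∑ i, x i with hS1
  set S2 : ℝ := ∑ i, x i * x i with hS2
  set d : ℝ := n * S2 - S1 * S1 with hd_def
  -- n ≠ 0
  have hn : (n : ℝ) ≠ 0 := by
    have : n ≠ 0 := by
      rintro rfl
      exact hx 0 (funext fun i => i.elim0)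
    exact_mod_cast this
  -- d ≠ 0
  have hdn : (n : ℝ) * d = ∑ i, ((n : ℝ) * x i - S1) ^ 2 := by
    have h1 : ∀ i : Fin n, ((n : ℝ) * x i - S1) ^ 2
        = (n : ℝ) ^ 2 * (x i * x i) - (2 * n * S1) * x i + S1 ^ 2 := fun i => by ring
    rw [Finset.sum_congr rfl fun i _ => h1 i, Finset.sum_add_distrib, Finset.sum_sub_distrib,
      ← Finset.mul_sum, ← Finset.mul_sum, Finset.sum_const, Finset.card_univ, Fintype.card_fin,
      nsmul_eq_mul, ← hS1, ← hS2, hd_def]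
    ring
  have hxn : ∃ i, (n : ℝ) * x i - S1 ≠ 0 := by
    by_contra h
    push_neg at h
    refine hx (S1 / n) (funext fun i => ?_)
    have hi := h i
    rw [hu]
    show x i = S1 / n * 1
    field_simp
    linarith [h i]
  have hd : d ≠ 0 := by
    obtain ⟨i0, hi0⟩ := hxn
    have hpos : 0 < ∑ i, ((n : ℝ) * x i - S1) ^ 2 :=
      Finset.sum_pos' (fun i _ => sq_nonneg _) ⟨i0, Finset.mem_univ _, by positivity⟩
    intro h
    rw [h, mul_zero] at hdn
    linarith
  have hd' : (n : ℝ) * S2 - S1 * S1 ≠ 0 := hd_def ▸ hd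
  -- centered x
  set c : Fin n → ℝ := fun i => x i - S1 / n with hc
  set w : Fin k → ℝ := Yᵀ *ᵥ c with hw
  clear_value c w
  -- inverse of BᵀB
  set M : Matrix (Unit ⊕ Unit) (Unit ⊕ Unit) ℝ :=
    fromBlocks (Matrix.of fun _ _ => S2 / d) (Matrix.of fun _ _ => -S1 / d)
      (Matrix.of fun _ _ => -S1 / d) (Matrix.of fun _ _ => (n : ℝ) / d) with hM
  have hBM : (Bᵀ * B) * M = 1 := by
    ext i j
    rcases i with i | i <;> rcases j with j | j <;>
      simp [hB, hM, hU, hu, Matrix.mul_apply, Fintype.sum_sum_type, Matrix.one_apply,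
        Finset.sum_const, Finset.card_univ, ← hS1, ← hS2] <;>
      · field_simp; rw [hd_def]; ring
  have hBinv : (Bᵀ * B)⁻¹ = M := inv_eq_right_inv hBM
  -- projection difference is rank one
  have hPdiff : B * M * Bᵀ - (n : ℝ)⁻¹ • vecMulVec u u = ((n : ℝ) / d) • vecMulVec c c := by
    ext i j
    simp [hB, hM, hU, hu, hc, Matrix.mul_apply, Fintype.sum_sum_type, vecMulVec_apply,
      Matrix.sub_apply, Matrix.smul_apply, smul_eq_mul]
    field_simp
    rw [hd_def]
    ring
  have hTE : T - E = ((n : ℝ) / d) • vecMulVec w w := by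
    rw [hT, hE, hBinv]
    have h4 : Yᵀ * (1 - (n : ℝ)⁻¹ • vecMulVec u u) * Y - Yᵀ * (1 - B * M * Bᵀ) * Y
        = Yᵀ * (B * M * Bᵀ - (n : ℝ)⁻¹ • vecMulVec u u) * Y := by
      rw [Matrix.mul_sub, Matrix.mul_sub, Matrix.mul_sub, Matrix.sub_mul, Matrix.sub_mul,
        Matrix.sub_mul]
      abel
    rw [h4, hPdiff, Matrix.mul_smul, Matrix.smul_mul, aux_conj_vecMulVec, hw]
  -- invertibility of AᵀA and T
  have hAU : IsUnit (Aᵀ * A) := by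
    refine aux_isUnit_of_rank_eq_card _ ?_
    rw [Matrix.rank_transpose_mul_self, hrank]
    simp [add_comm]
  have hAdet : IsUnit (Aᵀ * A).det := (Matrix.isUnit_iff_isUnit_det _).mp hAU
  have hblock : Aᵀ * A = fromBlocks (Uᵀ * U) (Uᵀ * Y) (Yᵀ * U) (Yᵀ * Y) := by
    rw [hA, transpose_fromCols, fromRows_mul_fromCols]
  letI iUU : Invertible (Uᵀ * U) := by
    refine ⟨Matrix.of fun _ _ => (n : ℝ)⁻¹, ?_, ?_⟩ <;>
      · ext i j
        simp [hU, hu, Matrix.mul_apply, Matrix.one_apply, Finset.sum_const, Finset.card_univ]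
        field_simp
  letI iA2 : Invertible (Aᵀ * A) := (Aᵀ * A).invertibleOfIsUnitDet hAdet
  letI iblock : Invertible (fromBlocks (Uᵀ * U) (Uᵀ * Y) (Yᵀ * U) (Yᵀ * Y)) :=
    iA2.copy _ hblock.symm
  letI iT' : Invertible ((Yᵀ * Y) - (Yᵀ * U) * ⅟(Uᵀ * U) * (Uᵀ * Y)) :=
    invertibleOfFromBlocks₁₁Invertible _ _ _ _
  have hinvOf : ⅟(Uᵀ * U) = Matrix.of fun _ _ => (n : ℝ)⁻¹ := rfl
  have huuU : vecMulVec u u = U * Uᵀ := by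
    ext i j; simp [hU, vecMulVec_apply, Matrix.mul_apply]
  have hid : (Matrix.of fun _ _ => (n : ℝ)⁻¹ : Matrix Unit Unit ℝ) = (n : ℝ)⁻¹ • 1 := by
    ext i j
    simp [Matrix.one_apply, Subsingleton.elim i j]
  have hTeq : T = (Yᵀ * Y) - (Yᵀ * U) * ⅟(Uᵀ * U) * (Uᵀ * Y) := by
    rw [hT, hinvOf, hid, huuU]
    simp only [Matrix.mul_sub, Matrix.sub_mul, Matrix.mul_one, Matrix.mul_smul,
      Matrix.smul_mul, Matrix.mul_assoc]
  letI iT : Invertible T := iT'.copy T hTeq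
  have hTdet : IsUnit T.det := Matrix.isUnit_det_of_invertible T
  -- the coefficient vector
  set b0 : Fin k → ℝ := T⁻¹ *ᵥ w with hb0
  clear_value b0
  have hTb : T *ᵥ b0 = w := by
    rw [hb0, Matrix.mulVec_mulVec, Matrix.mul_nonsing_inv _ hTdet, Matrix.one_mulVec]
  set r : ℝ := u ⬝ᵥ (Y *ᵥ b0) with hr
  set a0 : ℝ := (S1 - r) / n with ha0
  set v0 : (Unit ⊕ Fin k) → ℝ := Sum.elim (fun _ => a0) b0 with hv0
  clear_value r a0 v0
  have hUt : ∀ z : Fin n → ℝ, Uᵀ *ᵥ z = fun _ => u ⬝ᵥ z := by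
    intro z; funext j; simp [hU, Matrix.mulVec, dotProduct]
  have hUv : ∀ t : ℝ, U *ᵥ (fun _ : Unit => t) = t • u := by
    intro t; funext i
    simp [hU, Matrix.mulVec, dotProduct, mul_comm]
  have huu : u ⬝ᵥ u = n := by simp [hu, dotProduct]
  have hux : u ⬝ᵥ x = S1 := by rw [hu]; simp [dotProduct, ← hS1]
  have hcx : c = x - (S1 / n) • u := by
    funext i; simp [hc, hu]
  have hwx : w = Yᵀ *ᵥ x - (S1 / n) • (Yᵀ *ᵥ u) := by
    rw [hw, hcx, Matrix.mulVec_sub, Matrix.mulVec_smul]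
  have comp1 : (Uᵀ * U) *ᵥ (fun _ : Unit => a0) + (Uᵀ * Y) *ᵥ b0 = Uᵀ *ᵥ x := by
    rw [← Matrix.mulVec_mulVec, ← Matrix.mulVec_mulVec, hUv, hUt, hUt, hUt]
    funext j
    simp only [Pi.add_apply]
    rw [dotProduct_smul, huu, hux, ← hr, ha0, smul_eq_mul]
    field_simp
    ring
  have comp2 : (Yᵀ * U) *ᵥ (fun _ : Unit => a0) + (Yᵀ * Y) *ᵥ b0 = Yᵀ *ᵥ x := by
    have hYY : Yᵀ * Y = T + Yᵀ * U * ⅟(Uᵀ * U) * (Uᵀ * Y) := by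
      rw [hTeq]; abel
    have hsplit : (Yᵀ * U * ⅟(Uᵀ * U) * (Uᵀ * Y)) *ᵥ b0
        = (Yᵀ * U) *ᵥ (⅟(Uᵀ * U) *ᵥ ((Uᵀ * Y) *ᵥ b0)) := by
      rw [Matrix.mulVec_mulVec, Matrix.mulVec_mulVec, Matrix.mul_assoc, Matrix.mul_assoc]
    have e1 : (Uᵀ * Y) *ᵥ b0 = fun _ : Unit => r := by
      rw [← Matrix.mulVec_mulVec, hUt]
      funext i
      rw [hr]
    have e2 : ⅟(Uᵀ * U) *ᵥ (fun _ : Unit => r) = fun _ : Unit => (n : ℝ)⁻¹ * r := by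
      rw [hinvOf]; funext i; simp [Matrix.mulVec, dotProduct]
    have e3 : (Yᵀ * U) *ᵥ (fun _ : Unit => (n : ℝ)⁻¹ * r) = ((n : ℝ)⁻¹ * r) • (Yᵀ *ᵥ u) := by
      rw [← Matrix.mulVec_mulVec, hUv, Matrix.mulVec_smul]
    have e4 : (Yᵀ * U) *ᵥ (fun _ : Unit => a0) = a0 • (Yᵀ *ᵥ u) := by
      rw [← Matrix.mulVec_mulVec, hUv, Matrix.mulVec_smul]
    rw [hYY, Matrix.add_mulVec, hsplit, e1, e2, e3, e4, hTb, hwx]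
    have h6 : a0 + (n : ℝ)⁻¹ * r = S1 / n := by rw [ha0]; field_simp; ring
    funext j
    simp only [Pi.add_apply, Pi.sub_apply, Pi.smul_apply, smul_eq_mul]
    linear_combination ((Yᵀ *ᵥ u) j) * h6
  have hsolve : (Aᵀ * A) *ᵥ v0 = Aᵀ *ᵥ x := by
    rw [hblock, hA, transpose_fromCols, fromRows_mulVec, hv0, fromBlocks_mulVec]
    have hl : (Sum.elim (fun _ : Unit => a0) b0 ∘ Sum.inl : Unit → ℝ) = fun _ => a0 := rfl
    have hrc : (Sum.elim (fun _ : Unit => a0) b0 ∘ Sum.inr : Fin k → ℝ) = b0 := rfl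
    rw [hl, hrc, comp1, comp2]
  have hbhat' : bhat = b0 := by
    funext j
    rw [hbhat]
    show ((Aᵀ * A)⁻¹ *ᵥ (Aᵀ *ᵥ x)) (Sum.inr j) = b0 j
    rw [← hsolve, Matrix.mulVec_mulVec, Matrix.nonsing_inv_mul _ hAdet, Matrix.one_mulVec, hv0]
    rfl
  -- final computation
  have hV2 : V = ((n : ℝ) / d) * (w ⬝ᵥ (T⁻¹ *ᵥ w)) := by
    rw [hV, hTE, Matrix.smul_mul, Matrix.trace_smul, aux_trace_vecMulVec_mul, smul_eq_mul]
  have hβ2 : βhat = ((n : ℝ) / d) * (w ⬝ᵥ b0) := by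
    rw [hβ, hBinv, hs, hbhat']
    have hBt : Bᵀ *ᵥ (Y *ᵥ b0)
        = Sum.elim (fun _ : Unit => u ⬝ᵥ (Y *ᵥ b0)) (fun _ : Unit => x ⬝ᵥ (Y *ᵥ b0)) := by
      funext i
      rcases i with i | i <;> simp [hB, hU, hu, Matrix.mulVec, dotProduct]
    rw [hBt]
    have hwb : w ⬝ᵥ b0 = c ⬝ᵥ (Y *ᵥ b0) := by
      rw [hw, Matrix.mulVec_transpose, ← dotProduct_mulVec]
    have hcd : c ⬝ᵥ (Y *ᵥ b0) = x ⬝ᵥ (Y *ᵥ b0) - (S1 / n) * (u ⬝ᵥ (Y *ᵥ b0)) := by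
      rw [hcx, sub_dotProduct, smul_dotProduct, smul_eq_mul]
    rw [hwb, hcd]
    simp [hM, Matrix.mulVec, dotProduct, Fintype.sum_sum_type, ← hr]
    rw [hd_def]
    field_simp
    ring
  rw [hV2, hβ2, hb0]
end

section
/- Pillai's trace is bounded: for the single-predictor MANOVA with T = Yᵀ(I−11ᵀ/n)Y invertible and B = (1|x) with BᵀB invertible, the statistic V = tr((T−E)T⁻¹) satisfies 0 ≤ V ≤ 1. -/
open Matrix

set_option linter.unusedSectionVars false in
section
variable {m n p : Type*} [Fintype m] [Fintype n] [Fintype p]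

lemma mul_vecMulVec' (A : Matrix m n ℝ) (b : n → ℝ) (c : p → ℝ) :
    A * vecMulVec b c = vecMulVec (A *ᵥ b) c := by
  ext i j
  simp [mul_apply, vecMulVec_apply, mulVec, dotProduct, Finset.sum_mul, mul_assoc]

lemma vecMulVec_mul' (b : m → ℝ) (c : n → ℝ) (A : Matrix n p ℝ) :
    vecMulVec b c * A = vecMulVec b (c ᵥ* A) := by
  ext i j
  simp [mul_apply, vecMulVec_apply, vecMul, dotProduct, Finset.mul_sum, mul_assoc]

lemma vecMulVec_mulVec' (a : m → ℝ) (b : n → ℝ) (v : n → ℝ) :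
    vecMulVec a b *ᵥ v = (b ⬝ᵥ v) • a := by
  ext i
  simp [mulVec, vecMulVec_apply, dotProduct, Finset.mul_sum, mul_assoc, mul_comm, mul_left_comm]

lemma trace_vecMulVec_mul (a : m → ℝ) (b : m → ℝ) (M : Matrix m m ℝ) :
    (vecMulVec a b * M).trace = b ⬝ᵥ (M *ᵥ a) := by
  simp only [trace, diag, mul_apply, vecMulVec_apply, mulVec, dotProduct]
  rw [Finset.sum_comm]
  congr 1; ext j
  rw [Finset.mul_sum]
  congr 1; ext i; ring

lemma transpose_vecMulVec' (a b : m → ℝ) : (vecMulVec a b)ᵀ = vecMulVec b a := by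
  ext i j; simp [vecMulVec_apply, mul_comm]

lemma psd_smul_vecMulVec (c : ℝ) (hc : 0 ≤ c) (a : m → ℝ) :
    (c • vecMulVec a a).PosSemidef := by
  apply PosSemidef.of_dotProduct_mulVec_nonneg
  · ext i j
    simp [conjTranspose_apply, vecMulVec_apply, mul_comm]
  · intro v
    rw [smul_mulVec, vecMulVec_mulVec']
    have hsv : star v = v := by funext i; simp
    rw [hsv]
    have hh : v ⬝ᵥ c • (a ⬝ᵥ v) • a = c * ((a ⬝ᵥ v) * (a ⬝ᵥ v)) := by
      rw [dotProduct_smul, dotProduct_smul, smul_eq_mul, smul_eq_mul, dotProduct_comm v a]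
    rw [hh]
    exact mul_nonneg hc (mul_self_nonneg _)

end

/-- Pillai's trace with a single predictor is bounded: `0 ≤ V ≤ 1`. -/
theorem pillai_trace_bounded (n k : ℕ) (Y : Matrix (Fin n) (Fin k) ℝ) (x : Fin n → ℝ)
    (u : Fin n → ℝ) (hu : u = fun _ => (1 : ℝ))
    (B : Matrix (Fin n) (Unit ⊕ Unit) ℝ)
    (hB : B = fromCols (Matrix.of fun i (_ : Unit) => u i)
      (Matrix.of fun i (_ : Unit) => x i))
    (hBinv : IsUnit (Bᵀ * B).det)
    (T E : Matrix (Fin k) (Fin k) ℝ)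
    (hT : T = Yᵀ * (1 - (n : ℝ)⁻¹ • vecMulVec u u) * Y)
    (hTinv : IsUnit T.det)
    (hE : E = Yᵀ * (1 - B * (Bᵀ * B)⁻¹ * Bᵀ) * Y)
    (V : ℝ) (hV : V = ((T - E) * T⁻¹).trace) :
    0 ≤ V ∧ V ≤ 1 := by
  classical
  -- injectivity of B
  have hBinj : ∀ v : (Unit ⊕ Unit) → ℝ, B *ᵥ v = 0 → v = 0 := by
    intro v hv
    have h1 : (Bᵀ * B) *ᵥ v = 0 := by
      rw [← mulVec_mulVec, hv, mulVec_zero]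
    have h2 : (Bᵀ * B)⁻¹ *ᵥ ((Bᵀ * B) *ᵥ v) = v := by
      rw [mulVec_mulVec, nonsing_inv_mul _ hBinv, one_mulVec]
    rw [h1, mulVec_zero] at h2
    exact h2.symm
  have hBv : ∀ c₁ c₂ : ℝ, B *ᵥ (Sum.elim (fun _ => c₁) (fun _ => c₂))
      = fun i => c₁ + c₂ * x i := by
    intro c₁ c₂
    funext i
    subst hB hu
    simp [fromCols_mulVec_sumElim, mulVec, dotProduct, mul_comm]
  -- n ≠ 0
  have hn : n ≠ 0 := by
    intro h
    subst h
    have h0 : B *ᵥ (Sum.elim (fun _ => (1:ℝ)) (fun _ => (0:ℝ))) = 0 := by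
      funext i; exact i.elim0
    have := congrFun (hBinj _ h0) (Sum.inl ())
    simp at this
  have hnpos : (0:ℝ) < n := by positivity
  have hne : (n:ℝ) ≠ 0 := hnpos.ne'
  set mb : ℝ := (∑ i, x i) / n with hmb
  set z : Fin n → ℝ := fun i => x i - mb with hz
  set ν : ℝ := z ⬝ᵥ z with hν
  have hzu : z ⬝ᵥ u = 0 := by
    rw [hz, hu]
    simp only [dotProduct, mul_one]
    rw [Finset.sum_sub_distrib, Finset.sum_const, Finset.card_univ, Fintype.card_fin, hmb,
      nsmul_eq_mul]
    field_simp
    ring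
  have huu : u ⬝ᵥ u = (n:ℝ) := by
    rw [hu]; simp [dotProduct]
  have hνnn : 0 ≤ ν := by
    rw [hν]; exact Finset.sum_nonneg fun i _ => mul_self_nonneg _
  have hνpos : 0 < ν := by
    rcases hνnn.lt_or_eq with h | h
    · exact h
    · exfalso
      have h0 : ∑ i, z i * z i = 0 := by
        have := h.symm; rw [hν] at this; exact this
      have hzz : ∀ i, z i = 0 := by
        intro i
        have := (Finset.sum_eq_zero_iff_of_nonneg
          (fun j _ => mul_self_nonneg (z j))).mp h0 i (Finset.mem_univ i)
        exact mul_self_eq_zero.mp this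
      have hb0 : B *ᵥ (Sum.elim (fun _ => mb) (fun _ => (-1:ℝ))) = 0 := by
        rw [hBv]
        funext i
        have h2 : x i - mb = 0 := hzz i
        simp only [Pi.zero_apply]
        linarith
      have := congrFun (hBinj _ hb0) (Sum.inr ())
      simp at this
  clear_value mb z ν
  -- the projection P
  set C : Matrix (Unit ⊕ Unit) (Unit ⊕ Unit) ℝ := (Bᵀ * B)⁻¹ with hC
  set P : Matrix (Fin n) (Fin n) ℝ := B * C * Bᵀ with hP
  clear_value C P
  have hCt : Cᵀ = C := by
    rw [hC, transpose_nonsing_inv, transpose_mul, transpose_transpose]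
  have hPt : Pᵀ = P := by
    rw [hP, transpose_mul, transpose_mul, transpose_transpose, hCt, Matrix.mul_assoc]
  have hPB : P * B = B := by
    rw [hP, Matrix.mul_assoc (B*C), Matrix.mul_assoc B C, hC,
      nonsing_inv_mul _ hBinv, Matrix.mul_one]
  have hPu : P *ᵥ u = u := by
    have h1 : B *ᵥ (Sum.elim (fun _ => (1:ℝ)) (fun _ => (0:ℝ))) = u := by
      rw [hBv, hu]; funext i; simp
    rw [← h1, mulVec_mulVec, hPB]
  have hPx : P *ᵥ x = x := by
    have h1 : B *ᵥ (Sum.elim (fun _ => (0:ℝ)) (fun _ => (1:ℝ))) = x := by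
      rw [hBv]; funext i; simp
    rw [← h1, mulVec_mulVec, hPB]
  have hxzu : x = z + mb • u := by
    rw [hz, hu]; funext i; simp
  have hPz : P *ᵥ z = z := by
    have hzx : z = x - mb • u := by rw [hz, hu]; funext i; simp
    rw [hzx, mulVec_sub, mulVec_smul, hPu, hPx]
  -- the matrix Q
  set Q : Matrix (Fin n) (Fin n) ℝ :=
    (n:ℝ)⁻¹ • vecMulVec u u + ν⁻¹ • vecMulVec z z with hQ
  clear_value Q
  have hQu : Q *ᵥ u = u := by
    rw [hQ, add_mulVec, smul_mulVec, smul_mulVec,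
      vecMulVec_mulVec', vecMulVec_mulVec', huu, hzu, smul_smul, smul_smul,
      inv_mul_cancel₀ hne, one_smul, mul_zero, zero_smul, add_zero]
  have hQz : Q *ᵥ z = z := by
    have huz : u ⬝ᵥ z = 0 := by rw [dotProduct_comm]; exact hzu
    rw [hQ, add_mulVec, smul_mulVec, smul_mulVec,
      vecMulVec_mulVec', vecMulVec_mulVec', huz, ← hν, smul_smul, smul_smul,
      mul_zero, zero_smul, inv_mul_cancel₀ hνpos.ne', one_smul, zero_add]
  have hQx : Q *ᵥ x = x := by
    rw [hxzu, mulVec_add, mulVec_smul, hQu, hQz]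
  have hQB : Q * B = B := by
    rw [hB, mul_fromCols, fromCols_ext_iff]
    constructor
    · ext i j
      have h := congrFun hQu i
      simp only [mulVec, dotProduct] at h
      simp only [mul_apply, of_apply]
      exact h
    · ext i j
      have h := congrFun hQx i
      simp only [mulVec, dotProduct] at h
      simp only [mul_apply, of_apply]
      exact h
  have hQt : Qᵀ = Q := by
    rw [hQ, transpose_add, transpose_smul, transpose_smul,
      transpose_vecMulVec', transpose_vecMulVec']
  have hQP : Q * P = P := by
    rw [hP, ← Matrix.mul_assoc, ← Matrix.mul_assoc, hQB]
  have hPQ : P * Q = Q := by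
    rw [hQ, Matrix.mul_add, Matrix.mul_smul, Matrix.mul_smul,
      mul_vecMulVec', mul_vecMulVec', hPu, hPz]
  have hPeqQ : P = Q := by
    have h := congrArg Matrix.transpose hQP
    rw [transpose_mul, hQt, hPt] at h
    rw [← h, hPQ]
  -- key identity
  set a : Fin k → ℝ := Yᵀ *ᵥ z with ha
  clear_value a
  have key : T - E = ν⁻¹ • vecMulVec a a := by
    have h1 : T - E = Yᵀ * (P - (n:ℝ)⁻¹ • vecMulVec u u) * Y := by
      rw [hT, hE]
      simp only [Matrix.mul_sub, Matrix.sub_mul]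
      abel
    rw [h1, hPeqQ, hQ, add_sub_cancel_left, Matrix.mul_smul, Matrix.smul_mul,
      mul_vecMulVec', vecMulVec_mul', ← mulVec_transpose, ← ha]
  -- E is positive semidefinite
  have hPP : P * P = P := by
    nth_rewrite 2 [hP]
    rw [← Matrix.mul_assoc, ← Matrix.mul_assoc, hPB, ← hP]
  have hM : (1 - P) * (1 - P) = 1 - P := by
    simp only [Matrix.mul_sub, Matrix.sub_mul, hPP, Matrix.mul_one, Matrix.one_mul]
    abel
  have hMt : (1 - P)ᵀ = 1 - P := by
    rw [transpose_sub, transpose_one, hPt]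
  have hE_psd : E.PosSemidef := by
    have h1 : E = ((1 - P) * Y)ᴴ * ((1 - P) * Y) := by
      rw [conjTranspose_eq_transpose_of_trivial, transpose_mul, hMt,
        Matrix.mul_assoc, ← Matrix.mul_assoc (1-P), hM, hE, Matrix.mul_assoc]
    rw [h1]
    exact posSemidef_conjTranspose_mul_self _
  -- T is positive semidefinite
  have hT_psd : T.PosSemidef := by
    have h1 : T = E + ν⁻¹ • vecMulVec a a := by
      rw [← key]; abel
    rw [h1]
    exact hE_psd.add (psd_smul_vecMulVec _ (inv_nonneg.mpr hνnn) a)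
  have hTi_psd : (T⁻¹).PosSemidef := hT_psd.inv
  -- the scalar c
  set c : ℝ := a ⬝ᵥ (T⁻¹ *ᵥ a) with hc
  clear_value c
  have hc0 : 0 ≤ c := by
    have h := hTi_psd.dotProduct_mulVec_nonneg a
    rw [show star a = a from funext fun i => by simp] at h
    rw [hc]; exact h
  have hVc : V = ν⁻¹ * c := by
    rw [hV, key, Matrix.smul_mul, trace_smul, trace_vecMulVec_mul, smul_eq_mul, ← hc]
  set b : Fin k → ℝ := T⁻¹ *ᵥ a with hb
  clear_value b
  have hTb : T *ᵥ b = a := by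
    rw [hb, mulVec_mulVec, mul_nonsing_inv _ hTinv, one_mulVec]
  have hab : a ⬝ᵥ b = c := by rw [hc, hb]
  have hba : b ⬝ᵥ a = c := by rw [dotProduct_comm]; exact hab
  have hEb : 0 ≤ b ⬝ᵥ (E *ᵥ b) := by
    have h := hE_psd.dotProduct_mulVec_nonneg b
    rwa [show star b = b from funext fun i => by simp] at h
  have hEbv : b ⬝ᵥ (E *ᵥ b) = c - ν⁻¹ * (c * c) := by
    have hEeq : E = T - ν⁻¹ • vecMulVec a a := by rw [← key]; abel
    rw [hEeq, sub_mulVec, dotProduct_sub, hTb, hba, smul_mulVec,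
      vecMulVec_mulVec', hab, dotProduct_smul, dotProduct_smul, hba]
    simp only [smul_eq_mul]
  rw [hEbv] at hEb
  have hνinv : 0 ≤ ν⁻¹ := inv_nonneg.mpr hνnn
  constructor
  · rw [hVc]; exact mul_nonneg hνinv hc0
  · rw [hVc]
    nlinarith [mul_nonneg hνinv hEb, sq_nonneg (ν⁻¹ * c - 1)]
end
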